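/- Let G be a simple undirected graph with adjacency matrix A, and let |A| denote the positive semidefinite square root of A². Define the energy of a vertex i as E(i) = |A|_{ii}. If (i,j) is an edge of G, then E(i)·E(j) ≥ 1. -/

import Mathlib

open Finset Matrix

noncomputable section

variable {V : Type*} [Fintype V] [DecidableEq V]

/-- The adjacency matrix of a simple graph is Hermitian (over ℝ). -/
theorem SimpleGraph.isHermitian_adjMatrix' (G : SimpleGraph V) [DecidableRel G.Adj] :
    (G.adjMatrix ℝ).IsHermitian := by
  rw [Matrix.IsHermitian, Matrix.conjTranspose_eq_transpose_of_trivial]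
  exact G.isSymm_adjMatrix

/-- The energy of a graph: the sum of the absolute values of the
eigenvalues of its adjacency matrix. -/
def SimpleGraph.energy (G : SimpleGraph V) [DecidableRel G.Adj] : ℝ :=
  ∑ k, |G.isHermitian_adjMatrix'.eigenvalues k|

/-- The Randić index of a graph: the sum over the (unordered) edges `(i,j)`
of `1/√(deg i · deg j)`. -/
def SimpleGraph.randic (G : SimpleGraph V) [DecidableRel G.Adj] : ℝ :=
  ∑ e ∈ G.edgeFinset,
    Sym2.lift ⟨fun i j => 1 / Real.sqrt (G.degree i * G.degree j),
      fun i j => by simp [mul_comm]⟩ e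

end
section Aux

open scoped MatrixOrder

/-- For a real PSD matrix, off-diagonal entries are controlled by diagonal ones. -/
lemma psd_entry_sq_le {n : Type*} [Fintype n] [DecidableEq n]
    {P : Matrix n n ℝ} (hP : P.PosSemidef) (i j : n) :
    (P i j) ^ 2 ≤ P i i * P j j := by
  have hC : (CFC.sqrt P).PosSemidef := by
    open scoped MatrixOrder in exact (CFC.sqrt_nonneg P).posSemidef
  have hCs : CFC.sqrt P * CFC.sqrt P = P := by
    open scoped MatrixOrder in exact CFC.sqrt_mul_sqrt_self P hP.nonneg
  set C := CFC.sqrt P with hCdef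
  have hsym : ∀ a b, C a b = C b a := by
    intro a b
    have := hC.1
    calc C a b = Cᴴ a b := by rw [this]
    _ = C b a := by simp [Matrix.conjTranspose_apply]
  have hij : P i j = ∑ k, C k i * C k j := by
    rw [← hCs]; simp [Matrix.mul_apply, hsym i]
  have hii : P i i = ∑ k, C k i ^ 2 := by
    rw [← hCs]; simp [Matrix.mul_apply, hsym i, sq]
  have hjj : P j j = ∑ k, C k j ^ 2 := by
    rw [← hCs]; simp [Matrix.mul_apply, hsym j, sq]
  rw [hij, hii, hjj]
  exact Finset.sum_mul_sq_le_sq_mul_sq _ _ _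

section spectral
variable {n : Type*} [Fintype n] [DecidableEq n]
variable {A : Matrix n n ℝ} (hA : A.IsHermitian)

local notation "U" => (Matrix.IsHermitian.eigenvectorUnitary hA : Matrix n n ℝ)

/-- conjugation multiplication -/
lemma conj_mul_conj (d e : n → ℝ) :
    (U * diagonal d * star U) * (U * diagonal e * star U)
      = U * diagonal (fun k => d k * e k) * star U := by
  have h1 : star U * U = 1 := (Matrix.mem_unitaryGroup_iff').mp (hA.eigenvectorUnitary).2
  calc (U * diagonal d * star U) * (U * diagonal e * star U)
      = U * diagonal d * (star U * U) * diagonal e * star U := by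
        simp only [Matrix.mul_assoc]
    _ = U * (diagonal d * diagonal e) * star U := by rw [h1]; simp only [Matrix.mul_assoc, Matrix.mul_one]
    _ = U * diagonal (fun k => d k * e k) * star U := by rw [Matrix.diagonal_mul_diagonal]

lemma conj_psd (d : n → ℝ) (hd : ∀ k, 0 ≤ d k) :
    (U * diagonal d * star U).PosSemidef := by
  have := (Matrix.posSemidef_diagonal_iff.mpr hd).mul_mul_conjTranspose_same U
  simpa [Matrix.star_eq_conjTranspose] using this

lemma conj_add (d e : n → ℝ) :
    (U * diagonal d * star U) + (U * diagonal e * star U)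
      = U * diagonal (fun k => d k + e k) * star U := by
  rw [← Matrix.add_mul, ← Matrix.mul_add, Matrix.diagonal_add]

lemma conj_sub (d e : n → ℝ) :
    (U * diagonal d * star U) - (U * diagonal e * star U)
      = U * diagonal (fun k => d k - e k) * star U := by
  rw [← Matrix.sub_mul, ← Matrix.mul_sub, Matrix.diagonal_sub]

lemma specA : A = U * diagonal hA.eigenvalues * star U := by
  have := hA.spectral_theorem
  simpa using this

end spectral

end Aux

/-- If `B` is the positive semidefinite square root of `A²` (with `A` the adjacency
matrix of `G`), and the vertex energy is `E(i) = B i i`, then `E(i)·E(j) ≥ 1` for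
every edge `(i,j)` of `G`. -/
theorem stmt0 {V : Type*} [Fintype V] [DecidableEq V]
    (G : SimpleGraph V) [DecidableRel G.Adj]
    (B : Matrix V V ℝ) (hB : B.PosSemidef)
    (hB2 : B * B = G.adjMatrix ℝ * G.adjMatrix ℝ)
    {i j : V} (hij : G.Adj i j) :
    1 ≤ B i i * B j j := by
  set A : Matrix V V ℝ := G.adjMatrix ℝ with hAdef
  have hA : A.IsHermitian := by
    rw [Matrix.IsHermitian, Matrix.conjTranspose_eq_transpose_of_trivial]
    exact G.isSymm_adjMatrix
  set μ := hA.eigenvalues with hμ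
  set U : Matrix V V ℝ := (Matrix.IsHermitian.eigenvectorUnitary hA : Matrix V V ℝ) with hU
  set B' : Matrix V V ℝ := U * diagonal (fun k => |μ k|) * star U with hB'
  have hB'psd : B'.PosSemidef := conj_psd hA _ (fun k => abs_nonneg _)
  have hB'sq : B' * B' = A * A := by
    rw [hB', conj_mul_conj hA]
    conv_rhs => rw [specA hA, conj_mul_conj hA]
    have h : (fun k => |μ k| * |μ k|) = fun k => μ k * μ k :=
      funext fun k => abs_mul_abs_self _
    rw [h]
  have hBB' : B = B' := by
    open scoped MatrixOrder in
    exact (CFC.sq_eq_sq_iff B B' hB.nonneg hB'psd.nonneg).mp (by rw [pow_two, pow_two, hB2, hB'sq])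
  have hplus : (B' + A).PosSemidef := by
    have : B' + A = U * diagonal (fun k => |μ k| + μ k) * star U := by
      conv_lhs => rw [hB', specA hA]
      exact conj_add hA _ _
    rw [this]
    exact conj_psd hA _ (fun k => by have := neg_abs_le (μ k); linarith)
  have hminus : (B' - A).PosSemidef := by
    have : B' - A = U * diagonal (fun k => |μ k| - μ k) * star U := by
      conv_lhs => rw [hB', specA hA]
      exact conj_sub hA _ _
    rw [this]
    exact conj_psd hA _ (fun k => by have := le_abs_self (μ k); linarith)
  have h1 := psd_entry_sq_le hplus i j
  have h2 := psd_entry_sq_le hminus i j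
  have hAij : A i j = 1 := by simp [hAdef, hij]
  have hAii : A i i = 0 := by simp [hAdef]
  have hAjj : A j j = 0 := by simp [hAdef]
  simp only [Matrix.add_apply, Matrix.sub_apply, hAij, hAii, hAjj, add_zero, sub_zero] at h1 h2
  rw [hBB']
  nlinarith [h1, h2, sq_nonneg (B' i j)]
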